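/- Let λ > 0 and s ≥ (5λ + 1)/(6λ + 1). Let x be a non-dirty candidate with respect to threshold s in an election. Let r be a 3-wise median of the election such that every candidate z with z ≥_s x is ranked before x in r. Suppose |{z : x is ranked before z in r}| ≥ λ·|{z ≠ x : z ≥_s x}|. Then for every candidate y ≠ x with x ≥_s y, x is ranked before y in r. -/

import Mathlib

open Finset

/-- A ranking (strict total order) of the finite candidate set `C`, encoded as a
bijection with `Fin (Fintype.card C)`; position `0` is the top of the ranking. -/
abbrev Ranking (C : Type*) [Fintype C] := C ≃ Fin (Fintype.card C)

section Defs

variable {C : Type*} [Fintype C] [DecidableEq C]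

/-- `x` is ranked (strictly) before `y` in the ranking `π`. -/
def Before (π : Ranking C) (x y : C) : Prop := π x < π y

instance (π : Ranking C) (x y : C) : Decidable (Before π x y) :=
  inferInstanceAs (Decidable (π x < π y))

instance : DecidableEq (Ranking C) := fun a b =>
  decidable_of_iff (∀ i, a i = b i) Equiv.ext_iff.symm

/-- The top-ranked element of `S ⊆ C` according to `π` (`⊤` if `S = ∅`). -/
def topS (π : Ranking C) (S : Finset C) : WithTop C :=
  (S.image π).min.map (fun i => π.symm i)

/-- The `k`-wise Kendall-tau distance between two rankings: the number of subsets
`S ⊆ C` with `|S| ≤ k` on whose top element the two rankings disagree (subsets of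
size at most one never contribute). -/
def kDist (k : ℕ) (π σ : Ranking C) : ℕ :=
  ((Finset.univ : Finset C).powerset.filter
    (fun S => S.card ≤ k ∧ topS π S ≠ topS σ S)).card

/-- The `k`-wise Kendall-tau distance from a ranking to a voting profile. -/
def kDistV (k : ℕ) (π : Ranking C) (V : Multiset (Ranking C)) : ℕ :=
  (V.map (fun σ => kDist k π σ)).sum

/-- `π` is a `k`-wise median (for `k = 2`: a Kemeny ranking) of the profile `V`. -/
def IsKMedian (k : ℕ) (V : Multiset (Ranking C)) (π : Ranking C) : Prop :=
  ∀ σ : Ranking C, kDistV k π V ≤ kDistV k σ V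

/-- The number of votes of `V` in which `x` is ranked before `y`. -/
def votesBefore (V : Multiset (Ranking C)) (x y : C) : ℕ :=
  Multiset.card (V.filter (fun v => Before v x y))

/-- `x ≥ₛ y` : `x` is ranked before `y` in at least `s·|V|` of the votes. -/
def AtLeastRatio (V : Multiset (Ranking C)) (s : ℝ) (x y : C) : Prop :=
  s * (Multiset.card V : ℝ) ≤ (votesBefore V x y : ℝ)

/-- `x >ₛ y` : `x` is ranked before `y` in more than `s·|V|` of the votes. -/
def MoreThanRatio (V : Multiset (Ranking C)) (s : ℝ) (x y : C) : Prop :=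
  s * (Multiset.card V : ℝ) < (votesBefore V x y : ℝ)

noncomputable instance (V : Multiset (Ranking C)) (s : ℝ) (x y : C) :
    Decidable (AtLeastRatio V s x y) :=
  inferInstanceAs (Decidable (s * (Multiset.card V : ℝ) ≤ (votesBefore V x y : ℝ)))

/-- `x` is a non-dirty candidate w.r.t. threshold `s`. -/
def NonDirty (V : Multiset (Ranking C)) (s : ℝ) (x : C) : Prop :=
  ∀ y : C, y ≠ x → AtLeastRatio V s x y ∨ AtLeastRatio V s y x

/-- `x` is ranked first (is the winner) in the ranking `π`. -/
def RankedFirst (π : Ranking C) (x : C) : Prop :=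
  ∀ y : C, y ≠ x → Before π x y

instance (π : Ranking C) (x : C) : Decidable (RankedFirst π x) :=
  inferInstanceAs (Decidable (∀ y : C, y ≠ x → Before π x y))

end Defs

section Stmt17Aux

lemma countP_mono' {α : Type*} (s : Multiset α) (p q : α → Prop) [DecidablePred p]
    [DecidablePred q] (h : ∀ a ∈ s, p a → q a) : s.countP p ≤ s.countP q := by
  induction s using Multiset.induction_on with
  | empty => simp
  | cons a s ih =>
    have ih' := ih (fun b hb => h b (Multiset.mem_cons_of_mem hb))
    simp only [Multiset.countP_cons]
    by_cases hp : p a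
    · have hq := h a (Multiset.mem_cons_self a s) hp
      simp [hp, hq]; omega
    · simp only [hp, if_false]; split <;> omega

lemma countP_and_ge {α : Type*} (s : Multiset α) (p q : α → Prop) [DecidablePred p]
    [DecidablePred q] :
    s.countP p + s.countP q ≤ s.countP (fun a => p a ∧ q a) + Multiset.card s := by
  induction s using Multiset.induction_on with
  | empty => simp
  | cons a s ih =>
    simp only [Multiset.countP_cons, Multiset.card_cons]
    by_cases hp : p a <;> by_cases hq : q a <;> simp [hp, hq] <;> omega

lemma sum_map_ite {α : Type*} (s : Multiset α) (p : α → Prop) [DecidablePred p] :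
    (s.map (fun a => if p a then 1 else 0)).sum = s.countP p := by
  induction s using Multiset.induction_on with
  | empty => simp
  | cons a s ih => by_cases hp : p a <;> simp [hp, ih, Multiset.countP_cons] <;> omega

lemma multiset_sum_finset_sum {α β : Type*} (V : Multiset α) (P : Finset β) (g : α → β → ℕ) :
    (V.map (fun σ => ∑ S ∈ P, g σ S)).sum = ∑ S ∈ P, (V.map (fun σ => g σ S)).sum := by
  induction V using Multiset.induction_on with
  | empty => simp
  | cons a V ih => simp [ih, Finset.sum_add_distrib]

variable {C : Type*} [Fintype C] [DecidableEq C]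

lemma topS_eq (π : Ranking C) {S : Finset C} {m : C} (hm : m ∈ S)
    (h : ∀ z ∈ S, π m ≤ π z) : topS π S = (m : WithTop C) := by
  have h1 : (S.image π).min = ((π m : Fin _) : WithTop (Fin _)) := by
    apply le_antisymm
    · exact Finset.min_le (Finset.mem_image_of_mem _ hm)
    · apply Finset.le_min
      intro b hb
      obtain ⟨z, hz, rfl⟩ := Finset.mem_image.1 hb
      exact_mod_cast h z hz
  simp [topS, h1]

lemma topS_pair (π : Ranking C) {a b : C} (hab : a ≠ b) :
    topS π {a, b} = (a : WithTop C) ↔ Before π a b := by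
  have hne : π a ≠ π b := fun e => hab (π.injective e)
  constructor
  · intro h
    by_contra hlt
    have hba : π b < π a := by
      rcases lt_trichotomy (π a) (π b) with h' | h' | h'
      · exact absurd h' hlt
      · exact absurd h' hne
      · exact h'
    have : topS π {a, b} = (b : WithTop C) := by
      apply topS_eq
      · simp
      · intro z hz
        rcases Finset.mem_insert.1 hz with rfl | hz
        · exact le_of_lt hba
        · simp at hz; subst hz; exact le_rfl
    rw [h] at this
    exact hab (WithTop.coe_injective this)
  · intro h
    apply topS_eq
    · simp
    · intro z hz
      rcases Finset.mem_insert.1 hz with rfl | hz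
      · exact le_rfl
      · simp at hz; subst hz; exact le_of_lt h

lemma topS_triple (π : Ranking C) {a b c : C} (hab : a ≠ b) (hac : a ≠ c) (hbc : b ≠ c) :
    topS π {a, b, c} = (a : WithTop C) ↔ Before π a b ∧ Before π a c := by
  have hne1 : π a ≠ π b := fun e => hab (π.injective e)
  have hne2 : π a ≠ π c := fun e => hac (π.injective e)
  constructor
  · intro h
    by_contra hlt
    rw [Decidable.not_and_iff_or_not] at hlt
    have : ∃ m, m ∈ ({a, b, c} : Finset C) ∧ m ≠ a ∧ ∀ z ∈ ({a, b, c} : Finset C), π m ≤ π z := by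
      rcases le_or_gt (π b) (π c) with hbc' | hbc'
      · rcases hlt with h1 | h1
        · have hba : π b < π a := by
            rcases lt_trichotomy (π a) (π b) with h' | h' | h'
            · exact absurd h' h1
            · exact absurd h' hne1
            · exact h'
          exact ⟨b, by simp, hab.symm, by
            intro z hz
            simp only [Finset.mem_insert, Finset.mem_singleton] at hz
            rcases hz with rfl | rfl | rfl
            · exact le_of_lt hba
            · exact le_rfl
            · exact hbc'⟩
        · have hca : π c < π a := by
            rcases lt_trichotomy (π a) (π c) with h' | h' | h'
            · exact absurd h' h1
            · exact absurd h' hne2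
            · exact h'
          exact ⟨b, by simp, hab.symm, by
            intro z hz
            simp only [Finset.mem_insert, Finset.mem_singleton] at hz
            rcases hz with rfl | rfl | rfl
            · exact le_of_lt (lt_of_le_of_lt hbc' hca)
            · exact le_rfl
            · exact hbc'⟩
      · rcases hlt with h1 | h1
        · have hba : π b < π a := by
            rcases lt_trichotomy (π a) (π b) with h' | h' | h'
            · exact absurd h' h1
            · exact absurd h' hne1
            · exact h'
          exact ⟨c, by simp, hac.symm, by
            intro z hz
            simp only [Finset.mem_insert, Finset.mem_singleton] at hz
            rcases hz with rfl | rfl | rfl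
            · exact le_of_lt (lt_of_lt_of_le hbc' (le_of_lt hba))
            · exact le_of_lt hbc'
            · exact le_rfl⟩
        · have hca : π c < π a := by
            rcases lt_trichotomy (π a) (π c) with h' | h' | h'
            · exact absurd h' h1
            · exact absurd h' hne2
            · exact h'
          exact ⟨c, by simp, hac.symm, by
            intro z hz
            simp only [Finset.mem_insert, Finset.mem_singleton] at hz
            rcases hz with rfl | rfl | rfl
            · exact le_of_lt hca
            · exact le_of_lt hbc'
            · exact le_rfl⟩
    obtain ⟨m, hmm, hma, hmin⟩ := this
    have := topS_eq π hmm hmin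
    rw [h] at this
    exact hma (WithTop.coe_injective this.symm)
  · rintro ⟨h1, h2⟩
    apply topS_eq
    · simp
    · intro z hz
      simp only [Finset.mem_insert, Finset.mem_singleton] at hz
      rcases hz with rfl | rfl | rfl
      · exact le_rfl
      · exact le_of_lt h1
      · exact le_of_lt h2


lemma kDistV_eq_sum (k : ℕ) (π : Ranking C) (V : Multiset (Ranking C)) :
    kDistV k π V = ∑ S ∈ Finset.univ.powerset.filter (fun S : Finset C => S.card ≤ k),
      V.countP (fun σ => topS π S ≠ topS σ S) := by
  have h1 : ∀ σ : Ranking C, kDist k π σ =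
      ∑ S ∈ Finset.univ.powerset.filter (fun S : Finset C => S.card ≤ k),
        (if topS π S ≠ topS σ S then 1 else 0) := by
    intro σ
    rw [kDist, ← Finset.filter_filter, Finset.card_filter]
  calc (V.map (fun σ => kDist k π σ)).sum
      = (V.map (fun σ => ∑ S ∈ Finset.univ.powerset.filter (fun S : Finset C => S.card ≤ k),
          (if topS π S ≠ topS σ S then 1 else 0))).sum := by
        congr 1; exact Multiset.map_congr rfl (fun σ _ => h1 σ)
    _ = ∑ S ∈ Finset.univ.powerset.filter (fun S : Finset C => S.card ≤ k),
          (V.map (fun σ => if topS π S ≠ topS σ S then 1 else 0)).sum :=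
        multiset_sum_finset_sum _ _ _
    _ = _ := Finset.sum_congr rfl (fun S _ => sum_map_ite _ _)

end Stmt17Aux

set_option maxHeartbeats 2000000 in
/-- $5/6$-majority rule for the 3-wise Kemeny scheme, second version. -/
theorem stmt17 {C : Type*} [Fintype C] [DecidableEq C]
    (V : Multiset (Ranking C)) (hV : V ≠ 0)
    (lam s : ℝ) (hlam : 0 < lam) (hs : (5 * lam + 1) / (6 * lam + 1) ≤ s)
    (x : C) (hx : NonDirty V s x)
    (r : Ranking C) (hr : IsKMedian 3 V r)
    (hzx : ∀ z : C, AtLeastRatio V s z x → Before r z x)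
    (hcard : lam * ((Finset.univ.filter
        (fun z : C => z ≠ x ∧ AtLeastRatio V s z x)).card : ℝ) ≤
      ((Finset.univ.filter (fun z : C => Before r x z)).card : ℝ)) :
    ∀ y : C, y ≠ x → AtLeastRatio V s x y → Before r x y := by
  classical
  by_contra hcon
  push_neg at hcon
  obtain ⟨y0, hy0x, hy0s, hy0b⟩ := hcon
  -- the set of "bad" candidates; pick y bad with maximal position
  set Bad : Finset C :=
    Finset.univ.filter (fun z => z ≠ x ∧ AtLeastRatio V s x z ∧ ¬ Before r x z) with hBadDef
  have hBadne : Bad.Nonempty := ⟨y0, by simp [hBadDef, hy0x, hy0s, hy0b]⟩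
  obtain ⟨y, hymem, hymax⟩ := Finset.exists_max_image Bad (fun z => r z) hBadne
  rw [hBadDef, Finset.mem_filter] at hymem
  obtain ⟨-, hyx, hsxy, hnb⟩ := hymem
  -- basic numbers
  set n := Multiset.card V with hnDef
  have hn1 : 1 ≤ n := Nat.one_le_iff_ne_zero.2 (fun h => hV (Multiset.card_eq_zero.1 h))
  have hn1R : (1 : ℝ) ≤ (n : ℝ) := by exact_mod_cast hn1
  obtain ⟨p, hpDef⟩ : ∃ v, r y = v := ⟨_, rfl⟩
  obtain ⟨q, hqDef⟩ : ∃ v, r x = v := ⟨_, rfl⟩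
  have hrinj := r.injective
  have hpq : p < q := by
    rw [← hpDef, ← hqDef]
    have hne : r y ≠ r x := fun e => hyx (hrinj e)
    exact lt_of_le_of_ne (not_lt.1 hnb) hne
  have hpqv : (p : ℕ) < (q : ℕ) := hpq
  -- vote counts
  set W : C → C → ℕ := fun a b => V.countP (fun v => Before v a b) with hWDef
  have hWvotes : ∀ a b : C, votesBefore V a b = W a b := by
    intro a b
    simp only [votesBefore, hWDef]
    exact (Multiset.countP_eq_card_filter _ _).symm
  have hWle : ∀ a b : C, W a b ≤ n := fun a b => Multiset.countP_le_card _ _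
  have hWadd : ∀ a b : C, a ≠ b → W a b + W b a = n := by
    intro a b hab
    have h1 : V.countP (fun v => ¬ Before v a b) = W b a := by
      apply Multiset.countP_congr rfl
      intro v _
      rw [eq_iff_iff]
      constructor
      · intro h
        have hne : v a ≠ v b := fun e => hab (v.injective e)
        rcases lt_trichotomy (v a) (v b) with h' | h' | h'
        · exact absurd h' h
        · exact absurd h' hne
        · exact h'
      · intro h h'
        exact absurd (lt_trans h' h) (lt_irrefl _)
    rw [← h1, hnDef]
    exact (Multiset.card_eq_countP_add_countP _ _).symm
  have hWtrans : ∀ a b c : C, W a b + W b c ≤ W a c + n := by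
    intro a b c
    calc W a b + W b c ≤ V.countP (fun v => Before v a b ∧ Before v b c) + n :=
          countP_and_ge V _ _
      _ ≤ W a c + n := by
          apply Nat.add_le_add_right
          apply countP_mono'
          rintro v _ ⟨h1, h2⟩
          exact lt_trans h1 h2
  have hsW : ∀ {a b : C}, AtLeastRatio V s a b → s * (n : ℝ) ≤ (W a b : ℝ) := by
    intro a b h
    rw [AtLeastRatio, hWvotes] at h
    exact h
  -- bounds on s
  have hs1 : s ≤ 1 := by
    have h1 := hsW hsxy
    have h2 : (W x y : ℝ) ≤ n := by exact_mod_cast hWle x y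
    nlinarith
  have h6l : (0 : ℝ) < 6 * lam + 1 := by linarith
  have hs56 : 5 / 6 < s := by
    have : (5 : ℝ) / 6 < (5 * lam + 1) / (6 * lam + 1) := by
      rw [div_lt_div_iff₀ (by norm_num) h6l]
      nlinarith
    linarith
  have hls : 1 - s ≤ lam * (6 * s - 5) := by
    have := (div_le_iff₀ h6l).1 hs
    nlinarith
  -- position classes
  set InB : C → Prop := fun z => p < r z ∧ r z < q with hInBDef
  set InD : C → Prop := fun z => q < r z with hInDDef
  have hBx : ∀ b : C, InB b → b ≠ x := by
    rintro b ⟨h1, h2⟩ rfl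
    rw [hqDef] at h2
    exact absurd h2 (lt_irrefl q)
  have hBy : ∀ b : C, InB b → b ≠ y := by
    rintro b ⟨h1, h2⟩ rfl
    rw [hpDef] at h1
    exact absurd h1 (lt_irrefl p)
  have hDx : ∀ d : C, InD d → d ≠ x := by
    rintro d h rfl
    have h' : q < r d := h
    rw [hqDef] at h'
    exact absurd h' (lt_irrefl q)
  have hDy : ∀ d : C, InD d → d ≠ y := by
    rintro d h rfl
    have h' : q < r d := h
    rw [hpDef] at h'
    exact absurd (lt_trans hpq h') (lt_irrefl p)
  have hBD : ∀ b d : C, InB b → InD d → b ≠ d := by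
    rintro b d ⟨h1, h2⟩ h3 rfl
    exact absurd (lt_trans h2 h3) (lt_irrefl _)
  have hBs : ∀ b : C, InB b → AtLeastRatio V s b x := by
    intro b hb
    rcases hx b (hBx b hb) with h | h
    · exfalso
      have hmem : b ∈ Bad := by
        rw [hBadDef, Finset.mem_filter]
        refine ⟨Finset.mem_univ _, hBx b hb, h, fun h' => ?_⟩
        rw [Before, hqDef] at h'
        exact absurd (lt_trans h' hb.2) (lt_irrefl q)
      exact absurd hb.1 (not_lt.2 (hpDef ▸ hymax b hmem))
    · exact h
  have hDs : ∀ d : C, InD d → AtLeastRatio V s x d := by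
    intro d hd
    rcases hx d (hDx d hd) with h | h
    · exact h
    · have h2 := hzx d h
      rw [Before, hqDef] at h2
      exact absurd (lt_trans h2 hd) (lt_irrefl _)
  -- key vote-count inequalities, in ℝ
  have hWxy : s * (n : ℝ) ≤ (W x y : ℝ) := hsW hsxy
  have hWyx : (W y x : ℝ) ≤ (1 - s) * n := by
    have h1 := hWadd y x hyx
    have : (W y x : ℝ) + (W x y : ℝ) = n := by exact_mod_cast h1
    nlinarith
  have hWby : ∀ b : C, InB b → (2 * s - 1) * n ≤ (W b y : ℝ) := by
    intro b hb
    have h1 := hWtrans b x y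
    have h2 := hsW (hBs b hb)
    have h1R : (W b x : ℝ) + (W x y : ℝ) ≤ (W b y : ℝ) + n := by exact_mod_cast h1
    nlinarith
  have hWyb : ∀ b : C, InB b → (W y b : ℝ) ≤ 2 * (1 - s) * n := by
    intro b hb
    have h1 := hWadd y b (hBy b hb).symm
    have h1R : (W y b : ℝ) + (W b y : ℝ) = n := by exact_mod_cast h1
    have h2 := hWby b hb
    nlinarith
  have hWbd : ∀ b d : C, InB b → InD d → (2 * s - 1) * n ≤ (W b d : ℝ) := by
    intro b d hb hd
    have h1 := hWtrans b x d
    have h2 := hsW (hBs b hb)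
    have h3 := hsW (hDs d hd)
    have h1R : (W b x : ℝ) + (W x d : ℝ) ≤ (W b d : ℝ) + n := by exact_mod_cast h1
    nlinarith
  -- the modified ranking r' : y is moved to just below x
  have hfval : ∀ i : Fin (Fintype.card C), (i : ℕ) - 1 < Fintype.card C :=
    fun i => lt_of_le_of_lt (Nat.sub_le _ _) i.isLt
  set fp : Fin (Fintype.card C) → Fin (Fintype.card C) := fun i =>
    if i = p then q else if p < i ∧ i ≤ q then ⟨(i : ℕ) - 1, hfval i⟩ else i with hfpDef
  have hfpv : ∀ i : Fin (Fintype.card C), ((fp i : Fin (Fintype.card C)) : ℕ) =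
      if (i : ℕ) = (p : ℕ) then (q : ℕ)
      else if (p : ℕ) < (i : ℕ) ∧ (i : ℕ) ≤ (q : ℕ) then (i : ℕ) - 1 else (i : ℕ) := by
    intro i
    simp only [hfpDef]
    by_cases h1 : i = p
    · have h1' : (i : ℕ) = (p : ℕ) := congrArg Fin.val h1
      rw [if_pos h1, if_pos h1']
    · have h1' : ¬ (i : ℕ) = (p : ℕ) := fun e => h1 (Fin.ext e)
      by_cases h2 : p < i ∧ i ≤ q
      · have h2' : (p : ℕ) < (i : ℕ) ∧ (i : ℕ) ≤ (q : ℕ) := ⟨h2.1, h2.2⟩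
        rw [if_neg h1, if_pos h2, if_neg h1', if_pos h2']
      · have h2' : ¬ ((p : ℕ) < (i : ℕ) ∧ (i : ℕ) ≤ (q : ℕ)) := fun hc => h2 ⟨hc.1, hc.2⟩
        rw [if_neg h1, if_neg h2, if_neg h1', if_neg h2']
  have hfpinj : Function.Injective fp := by
    intro i j h
    have hv := congrArg Fin.val h
    rw [hfpv i, hfpv j] at hv
    apply Fin.ext
    split_ifs at hv <;> omega
  have hfpbij : Function.Bijective fp := Finite.injective_iff_bijective.1 hfpinj
  set e : Fin (Fintype.card C) ≃ Fin (Fintype.card C) := Equiv.ofBijective fp hfpbij with heDef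
  set r' : Ranking C := r.trans e with hr'Def
  have hr'app : ∀ z : C, r' z = fp (r z) := fun z => rfl
  have hr'y : ((r' y : Fin (Fintype.card C)) : ℕ) = q := by
    rw [hr'app, hpDef]
    simp [hfpDef]
  have hr'x : ((r' x : Fin (Fintype.card C)) : ℕ) = (q : ℕ) - 1 := by
    rw [hr'app, hqDef]
    simp only [hfpDef]
    have h1 : q ≠ p := fun e => absurd (e ▸ hpq) (lt_irrefl _)
    rw [if_neg h1, if_pos ⟨hpq, le_refl q⟩]
  have hr'B : ∀ b : C, InB b → ((r' b : Fin (Fintype.card C)) : ℕ) = ((r b : Fin (Fintype.card C)) : ℕ) - 1 := by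
    intro b hb
    rw [hr'app]
    simp only [hfpDef]
    have h1 : r b ≠ p := fun e => absurd (e ▸ hb.1) (lt_irrefl _)
    rw [if_neg h1, if_pos ⟨hb.1, le_of_lt hb.2⟩]
  have hr'D : ∀ d : C, InD d → r' d = r d := by
    intro d hd
    rw [hr'app]
    simp only [hfpDef]
    have h1 : r d ≠ p := fun e => absurd (e ▸ lt_trans hpq hd) (lt_irrefl _)
    have h2 : ¬ (p < r d ∧ r d ≤ q) := fun hc => absurd (lt_of_lt_of_le hd hc.2) (lt_irrefl _)
    rw [if_neg h1, if_neg h2]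
  -- framework: distances as sums over small subsets
  set P3 : Finset (Finset C) := Finset.univ.powerset.filter (fun S => S.card ≤ 3) with hP3Def
  set F : Ranking C → Finset C → ℕ :=
    fun π S => V.countP (fun σ => topS π S ≠ topS σ S) with hFDef
  set G : Finset C → ℝ := fun S => (F r S : ℝ) - (F r' S : ℝ) with hGDef
  have hbridge : (kDistV 3 r V : ℝ) - (kDistV 3 r' V : ℝ) = ∑ S ∈ P3, G S := by
    rw [kDistV_eq_sum 3 r V, kDistV_eq_sum 3 r' V, hP3Def]
    push_cast
    rw [← Finset.sum_sub_distrib]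
  have hFle : ∀ (π : Ranking C) (S : Finset C), F π S ≤ n := by
    intro π S
    exact Multiset.countP_le_card _ _
  have hFcompl : ∀ (π : Ranking C) (S : Finset C) (c : C), topS π S = (c : WithTop C) →
      (F π S : ℝ) = (n : ℝ) - (V.countP (fun σ => topS σ S = (c : WithTop C)) : ℝ) := by
    intro π S c h
    have h1 : F π S = V.countP (fun σ => ¬ (topS σ S = (c : WithTop C))) := by
      simp only [hFDef, h]
      apply Multiset.countP_congr rfl
      intro σ _
      rw [eq_iff_iff]
      exact ⟨fun h' h'' => h' h''.symm, fun h' h'' => h' h''.symm⟩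
    have h2 : V.countP (fun σ => topS σ S = (c : WithTop C))
        + V.countP (fun σ => ¬ (topS σ S = (c : WithTop C))) = n := by
      rw [hnDef]
      exact (Multiset.card_eq_countP_add_countP _ _).symm
    have h2R : (V.countP (fun σ => topS σ S = (c : WithTop C)) : ℝ)
        + (V.countP (fun σ => ¬ (topS σ S = (c : WithTop C))) : ℝ) = (n : ℝ) := by
      exact_mod_cast h2
    rw [h1]
    linarith
  have hcount_pair : ∀ a b : C, a ≠ b →
      V.countP (fun σ => topS σ {a, b} = (a : WithTop C)) = W a b := by
    intro a b hab
    apply Multiset.countP_congr rfl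
    intro σ _
    rw [eq_iff_iff]
    exact topS_pair σ hab
  have hcount_triple : ∀ a b c : C, a ≠ b → a ≠ c → b ≠ c →
      V.countP (fun σ => topS σ {a, b, c} = (a : WithTop C))
        = V.countP (fun σ => Before σ a b ∧ Before σ a c) := by
    intro a b c hab hac hbc
    apply Multiset.countP_congr rfl
    intro σ _
    rw [eq_iff_iff]
    exact topS_triple σ hab hac hbc
  have hand_ge : ∀ a b c : C, (W a b : ℝ) + (W a c : ℝ) - (n : ℝ)
      ≤ (V.countP (fun σ => Before σ a b ∧ Before σ a c) : ℝ) := by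
    intro a b c
    have h1 := countP_and_ge V (fun σ => Before σ a b) (fun σ => Before σ a c)
    have h1R : (W a b : ℝ) + (W a c : ℝ)
        ≤ (V.countP (fun σ => Before σ a b ∧ Before σ a c) : ℝ) + n := by
      exact_mod_cast h1
    linarith
  have hand_le : ∀ a b c : C, (V.countP (fun σ => Before σ a b ∧ Before σ a c) : ℝ)
      ≤ (W a b : ℝ) := by
    intro a b c
    have h1 : V.countP (fun σ => Before σ a b ∧ Before σ a c) ≤ W a b := by
      apply countP_mono'
      exact fun v _ h => h.1
    exact_mod_cast h1
  -- generic triple computation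
  have hGtriple : ∀ t u : C, t ≠ y → u ≠ y → t ≠ u → topS r' {y, t, u} = (t : WithTop C) →
      p < r t → p < r u →
      G {y, t, u} = (V.countP (fun σ => Before σ t y ∧ Before σ t u) : ℝ)
        - (V.countP (fun σ => Before σ y t ∧ Before σ y u) : ℝ) := by
    intro t u hty huy htu htop hpt hpu
    have ht1 : topS r {y, t, u} = (y : WithTop C) := by
      refine (topS_triple r hty.symm huy.symm htu).2 ⟨?_, ?_⟩
      · show r y < r t
        rw [hpDef]; exact hpt
      · show r y < r u
        rw [hpDef]; exact hpu
    have h1 := hFcompl r _ y ht1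
    have h2 := hFcompl r' _ t htop
    have h3 := hcount_triple y t u hty.symm huy.symm htu
    have h4 : V.countP (fun σ => topS σ {y, t, u} = (t : WithTop C))
        = V.countP (fun σ => Before σ t y ∧ Before σ t u) := by
      rw [Finset.insert_comm]
      exact hcount_triple t y u hty htu huy.symm
    rw [hGDef]
    simp only
    rw [h1, h2, h3, h4]
    ring
  -- the six shape bounds
  have hGxy : (2 * s - 1) * n ≤ G {y, x} := by
    have ht1 : topS r {y, x} = (y : WithTop C) := by
      refine (topS_pair r hyx).2 ?_
      show r y < r x
      rw [hpDef, hqDef]; exact hpq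
    have ht2 : topS r' {y, x} = (x : WithTop C) := by
      rw [Finset.pair_comm]
      refine (topS_pair r' hyx.symm).2 ?_
      show r' x < r' y
      rw [Fin.lt_def, hr'x, hr'y]
      omega
    have h1 := hFcompl r _ y ht1
    have h2 := hFcompl r' _ x ht2
    have h3 := hcount_pair y x hyx
    have h4 : V.countP (fun σ => topS σ {y, x} = (x : WithTop C)) = W x y := by
      rw [Finset.pair_comm]
      exact hcount_pair x y hyx.symm
    have h5 : (W y x : ℝ) + (W x y : ℝ) = n := by exact_mod_cast hWadd y x hyx
    rw [hGDef]
    simp only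
    rw [h1, h2, h3, h4]
    linarith [hWxy]
  have hGyb : ∀ b : C, InB b → 0 ≤ G {y, b} := by
    intro b hb
    have hby := (hBy b hb)
    have ht1 : topS r {y, b} = (y : WithTop C) := by
      refine (topS_pair r hby.symm).2 ?_
      show r y < r b
      rw [hpDef]; exact hb.1
    have ht2 : topS r' {y, b} = (b : WithTop C) := by
      rw [Finset.pair_comm]
      refine (topS_pair r' hby).2 ?_
      show r' b < r' y
      rw [Fin.lt_def, hr'B b hb, hr'y]
      have h1 : ((r b : Fin (Fintype.card C)) : ℕ) < (q : ℕ) := hb.2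
      omega
    have h1 := hFcompl r _ y ht1
    have h2 := hFcompl r' _ b ht2
    have h3 := hcount_pair y b hby.symm
    have h4 : V.countP (fun σ => topS σ {y, b} = (b : WithTop C)) = W b y := by
      rw [Finset.pair_comm]
      exact hcount_pair b y hby
    have h5 : (W y b : ℝ) + (W b y : ℝ) = n := by exact_mod_cast hWadd y b hby.symm
    rw [hGDef]
    simp only
    rw [h1, h2, h3, h4]
    nlinarith [hWby b hb, hn1R, hs56]
  have hGybx : ∀ b : C, InB b → 0 ≤ G {y, b, x} := by
    intro b hb
    have hbv1 : (p : ℕ) < ((r b : Fin (Fintype.card C)) : ℕ) := hb.1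
    have hbv2 : ((r b : Fin (Fintype.card C)) : ℕ) < (q : ℕ) := hb.2
    have htop : topS r' {y, b, x} = (b : WithTop C) := by
      rw [Finset.insert_comm]
      refine (topS_triple r' (hBy b hb) (hBx b hb) hyx).2 ⟨?_, ?_⟩
      · show r' b < r' y
        rw [Fin.lt_def, hr'B b hb, hr'y]; omega
      · show r' b < r' x
        rw [Fin.lt_def, hr'B b hb, hr'x]; omega
    have heq := hGtriple b x (hBy b hb) hyx.symm (hBx b hb) htop hb.1 (by rw [hqDef]; exact hpq)
    rw [heq]
    have h1 := hand_ge b y x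
    have h2 := hand_le y b x
    have h3 : V.countP (fun σ => Before σ y b ∧ Before σ y x)
        ≤ V.countP (fun σ => Before σ y x) := by
      apply countP_mono'
      exact fun v _ h => h.2
    have h3R : (V.countP (fun σ => Before σ y b ∧ Before σ y x) : ℝ) ≤ (W y x : ℝ) := by
      exact_mod_cast h3
    nlinarith [hWby b hb, hsW (hBs b hb), hWyx, hn1R, hs56]
  have hGyxd : ∀ d : C, InD d → 0 ≤ G {y, x, d} := by
    intro d hd
    have hdv : (q : ℕ) < ((r d : Fin (Fintype.card C)) : ℕ) := hd
    have htop : topS r' {y, x, d} = (x : WithTop C) := by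
      rw [Finset.insert_comm]
      refine (topS_triple r' hyx.symm (hDx d hd).symm (hDy d hd).symm).2 ⟨?_, ?_⟩
      · show r' x < r' y
        rw [Fin.lt_def, hr'x, hr'y]; omega
      · show r' x < r' d
        rw [Fin.lt_def, hr'x, hr'D d hd]; omega
    have heq := hGtriple x d hyx.symm (hDy d hd) (hDx d hd).symm htop
      (by rw [hqDef]; exact hpq) (by rw [← hpDef] at hpq ⊢; exact lt_trans hpq hd)
    rw [heq]
    have h1 := hand_ge x y d
    have h3 : V.countP (fun σ => Before σ y x ∧ Before σ y d)
        ≤ V.countP (fun σ => Before σ y x) := by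
      apply countP_mono'
      exact fun v _ h => h.1
    have h3R : (V.countP (fun σ => Before σ y x ∧ Before σ y d) : ℝ) ≤ (W y x : ℝ) := by
      exact_mod_cast h3
    nlinarith [hWxy, hsW (hDs d hd), hWyx, hn1R, hs56]
  have hGybd : ∀ b d : C, InB b → InD d → (6 * s - 5) * n ≤ G {y, b, d} := by
    intro b d hb hd
    have hbv1 : (p : ℕ) < ((r b : Fin (Fintype.card C)) : ℕ) := hb.1
    have hbv2 : ((r b : Fin (Fintype.card C)) : ℕ) < (q : ℕ) := hb.2
    have hdv : (q : ℕ) < ((r d : Fin (Fintype.card C)) : ℕ) := hd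
    have htop : topS r' {y, b, d} = (b : WithTop C) := by
      rw [Finset.insert_comm]
      refine (topS_triple r' (hBy b hb) (hBD b d hb hd) (hDy d hd).symm).2 ⟨?_, ?_⟩
      · show r' b < r' y
        rw [Fin.lt_def, hr'B b hb, hr'y]; omega
      · show r' b < r' d
        rw [Fin.lt_def, hr'B b hb, hr'D d hd]; omega
    have heq := hGtriple b d (hBy b hb) (hDy d hd) (hBD b d hb hd) htop hb.1
      (lt_trans (hpDef ▸ hpq) hd)
    rw [heq]
    have h1 := hand_ge b y d
    have h3 : V.countP (fun σ => Before σ y b ∧ Before σ y d)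
        ≤ V.countP (fun σ => Before σ y b) := by
      apply countP_mono'
      exact fun v _ h => h.1
    have h3R : (V.countP (fun σ => Before σ y b ∧ Before σ y d) : ℝ) ≤ (W y b : ℝ) := by
      exact_mod_cast h3
    nlinarith [hWby b hb, hWbd b d hb hd, hWyb b hb, hn1R, hs56]
  have hGybb : ∀ b b' : C, InB b → InB b' → b ≠ b' → -(2 * (1 - s) * n) ≤ G {y, b, b'} := by
    intro b b' hb hb' hbb
    have ht1 : topS r {y, b, b'} = (y : WithTop C) := by
      refine (topS_triple r (hBy b hb).symm (hBy b' hb').symm hbb).2 ⟨?_, ?_⟩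
      · show r y < r b
        rw [hpDef]; exact hb.1
      · show r y < r b'
        rw [hpDef]; exact hb'.1
    have h1 := hFcompl r _ y ht1
    have h2 : (F r' {y, b, b'} : ℝ) ≤ n := by exact_mod_cast hFle r' _
    have h3 := hcount_triple y b b' (hBy b hb).symm (hBy b' hb').symm hbb
    have h4 : V.countP (fun σ => Before σ y b ∧ Before σ y b')
        ≤ V.countP (fun σ => Before σ y b) := by
      apply countP_mono'
      exact fun v _ h => h.1
    have h4R : (V.countP (fun σ => Before σ y b ∧ Before σ y b') : ℝ) ≤ (W y b : ℝ) := by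
      exact_mod_cast h4
    have h5 := hWyb b hb
    rw [hGDef]
    simp only
    rw [h1, h3]
    linarith
  -- monotonicity of fp away from p
  have hf_le : ∀ i j : Fin (Fintype.card C), i ≤ j → i ≠ p → fp i ≤ fp j := by
    intro i j hij hip
    have h1 := hfpv i
    have h2 := hfpv j
    have hipv : ¬ ((i : ℕ) = (p : ℕ)) := fun e => hip (Fin.ext e)
    have hijv : (i : ℕ) ≤ (j : ℕ) := hij
    rw [Fin.le_def, h1, h2]
    split_ifs <;> omega
  -- classification of subsets whose top may change
  have hclassify : ∀ S ∈ P3, topS r S = topS r' S ∨ S = {y, x} ∨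
      (∃ b, InB b ∧ S = {y, b}) ∨ (∃ b, InB b ∧ S = {y, b, x}) ∨
      (∃ d, InD d ∧ S = {y, x, d}) ∨ (∃ b d, InB b ∧ InD d ∧ S = {y, b, d}) ∨
      (∃ b b', InB b ∧ InB b' ∧ b ≠ b' ∧ S = {y, b, b'}) := by
    intro S hS
    have hScard : S.card ≤ 3 := by
      rw [hP3Def, Finset.mem_filter] at hS
      exact hS.2
    rcases S.eq_empty_or_nonempty with rfl | hne
    · left; simp [topS]
    obtain ⟨m, hmS, hmmin⟩ := S.exists_min_image (fun z => r z) hne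
    by_cases hmy : m = y
    · subst hmy
      by_cases hall : ∀ z ∈ S, z ≠ m → q < r z
      · left
        have h1 : topS r S = (m : WithTop C) := topS_eq r hmS hmmin
        have h2 : topS r' S = (m : WithTop C) := by
          apply topS_eq r' hmS
          intro z hz
          rcases eq_or_ne z m with rfl | hzy
          · exact le_rfl
          · have hq := hall z hz hzy
            have hzD : r' z = r z := hr'D z hq
            rw [Fin.le_def, hzD, hr'y]
            exact Nat.le_of_lt hq
        rw [h1, h2]
      · push_neg at hall
        obtain ⟨z0, hz0S, hz0y, hz0q⟩ := hall
        right
        have hclass : ∀ z ∈ S, z ≠ m → (z = x ∨ InB z ∨ InD z) := by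
          intro z hz hzy
          have hple : p ≤ r z := hpDef ▸ hmmin z hz
          have hpne : p ≠ r z := fun e => hzy (hrinj ((hpDef.trans e).symm))
          have h1 : p < r z := lt_of_le_of_ne hple hpne
          rcases lt_trichotomy (r z) q with h2 | h2 | h2
          · exact Or.inr (Or.inl ⟨h1, h2⟩)
          · exact Or.inl (hrinj (h2.trans hqDef.symm))
          · exact Or.inr (Or.inr h2)
        set T := S.erase m with hTDef
        have hST : S = insert m T := (Finset.insert_erase hmS).symm
        have hTmem : ∀ z ∈ T, z ≠ m ∧ z ∈ S :=
          fun z hz => ⟨Finset.ne_of_mem_erase hz, Finset.mem_of_mem_erase hz⟩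
        have hz0T : z0 ∈ T := Finset.mem_erase.2 ⟨hz0y, hz0S⟩
        have hTcard : T.card ≤ 2 := by
          have h1 := Finset.card_erase_of_mem hmS
          rw [← hTDef] at h1
          omega
        have hTne : T.Nonempty := ⟨z0, hz0T⟩
        have hTc : T.card = 1 ∨ T.card = 2 := by
          have h2 := Finset.card_pos.2 hTne
          omega
        rcases hTc with hTc | hTc
        · obtain ⟨a, ha⟩ := Finset.card_eq_one.1 hTc
          have haz0 : z0 = a := by
            rw [ha] at hz0T
            exact Finset.mem_singleton.1 hz0T
          subst haz0
          rcases hclass z0 hz0S hz0y with rfl | hb | hD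
          · left; rw [hST, ha]
          · right; left; exact ⟨z0, hb, by rw [hST, ha]⟩
          · exact absurd (lt_of_lt_of_le hD hz0q) (lt_irrefl _)
        · obtain ⟨a, b, hab, hT⟩ := Finset.card_eq_two.1 hTc
          have haT : a ∈ T := by rw [hT]; simp
          have hbT : b ∈ T := by rw [hT]; simp
          obtain ⟨hay, haS⟩ := hTmem a haT
          obtain ⟨hby, hbS⟩ := hTmem b hbT
          have hz0ab : z0 = a ∨ z0 = b := by
            rw [hT] at hz0T
            simpa using hz0T
          have hSab : S = {m, a, b} := by rw [hST, hT]
          have hSba : S = {m, b, a} := by rw [hST, hT, Finset.pair_comm]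
          rcases hclass a haS hay with rfl | hBa | hDa
          · rcases hclass b hbS hby with rfl | hBb | hDb
            · exact absurd rfl hab
            · right; right; left
              exact ⟨b, hBb, hSba⟩
            · right; right; right; left
              exact ⟨b, hDb, hSab⟩
          · rcases hclass b hbS hby with rfl | hBb | hDb
            · right; right; left
              exact ⟨a, hBa, hSab⟩
            · right; right; right; right; right
              exact ⟨a, b, hBa, hBb, hab, hSab⟩
            · right; right; right; right; left
              exact ⟨a, b, hBa, hDb, hSab⟩
          · rcases hclass b hbS hby with rfl | hBb | hDb
            · right; right; right; left
              exact ⟨a, hDa, hSba⟩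
            · right; right; right; right; left
              exact ⟨b, a, hBb, hDa, hSba⟩
            · exfalso
              rcases hz0ab with rfl | rfl
              · exact absurd (lt_of_lt_of_le hDa hz0q) (lt_irrefl _)
              · exact absurd (lt_of_lt_of_le hDb hz0q) (lt_irrefl _)
    · left
      have hmp : r m ≠ p := fun e => hmy (hrinj (e.trans hpDef.symm))
      have h1 : topS r S = (m : WithTop C) := topS_eq r hmS hmmin
      have h2 : topS r' S = (m : WithTop C) := by
        apply topS_eq r' hmS
        intro z hz
        exact hf_le (r m) (r z) (hmmin z hz) hmp
      rw [h1, h2]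
  -- shape predicates and the lower-bound function
  set shBD : Finset C → Prop := fun S => ∃ b d, InB b ∧ InD d ∧ S = {y, b, d} with hshBDDef
  set shBB : Finset C → Prop :=
    fun S => ∃ b b', InB b ∧ InB b' ∧ b ≠ b' ∧ S = {y, b, b'} with hshBBDef
  set cF : Finset C → ℝ := fun S =>
    (if shBD S then (6 * s - 5) * (n : ℝ) else 0)
      + (if shBB S then -(2 * (1 - s) * (n : ℝ)) else 0)
      + (if S = {y, x} then (2 * s - 1) * (n : ℝ) else 0) with hcFDef
  have hBDnotBB : ∀ S, shBD S → ¬ shBB S := by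
    rintro S ⟨b, d, hb, hd, rfl⟩ ⟨c, c', hc, hc', hcc, hE⟩
    have hdmem : d ∈ ({y, b, d} : Finset C) := by simp
    rw [hE] at hdmem
    simp only [Finset.mem_insert, Finset.mem_singleton] at hdmem
    rcases hdmem with h | h | h
    · exact (hDy d hd) h
    · rw [← h] at hc
      exact absurd (lt_trans hc.2 hd) (lt_irrefl _)
    · rw [← h] at hc'
      exact absurd (lt_trans hc'.2 hd) (lt_irrefl _)
  have hBDnotXY : ∀ S, shBD S → S ≠ ({y, x} : Finset C) := by
    rintro S ⟨b, d, hb, hd, rfl⟩ hE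
    have hxmem : x ∈ ({y, x} : Finset C) := by simp
    rw [← hE] at hxmem
    simp only [Finset.mem_insert, Finset.mem_singleton] at hxmem
    rcases hxmem with h | h | h
    · exact hyx h.symm
    · exact (hBx b hb) h.symm
    · exact (hDx d hd) h.symm
  have hBBnotXY : ∀ S, shBB S → S ≠ ({y, x} : Finset C) := by
    rintro S ⟨b, b', hb, hb', hbb, rfl⟩ hE
    have hxmem : x ∈ ({y, x} : Finset C) := by simp
    rw [← hE] at hxmem
    simp only [Finset.mem_insert, Finset.mem_singleton] at hxmem
    rcases hxmem with h | h | h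
    · exact hyx h.symm
    · exact (hBx b hb) h.symm
    · exact (hBx b' hb') h.symm
  -- pointwise bound
  have hpoint : ∀ S ∈ P3, cF S ≤ G S := by
    intro S hSP
    by_cases h1 : shBD S
    · have hcS : cF S = (6 * s - 5) * (n : ℝ) := by
        rw [hcFDef]
        simp only
        rw [if_pos h1, if_neg (hBDnotBB S h1), if_neg (hBDnotXY S h1)]
        ring
      rw [hcS]
      obtain ⟨b, d, hb, hd, rfl⟩ := h1
      exact hGybd b d hb hd
    by_cases h2 : shBB S
    · have hcS : cF S = -(2 * (1 - s) * (n : ℝ)) := by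
        rw [hcFDef]
        simp only
        rw [if_neg h1, if_pos h2, if_neg (hBBnotXY S h2)]
        ring
      rw [hcS]
      obtain ⟨b, b', hb, hb', hbb, rfl⟩ := h2
      exact hGybb b b' hb hb' hbb
    by_cases h3 : S = ({y, x} : Finset C)
    · have hcS : cF S = (2 * s - 1) * (n : ℝ) := by
        rw [hcFDef]
        simp only
        rw [if_neg h1, if_neg h2, if_pos h3]
        ring
      rw [hcS, h3]
      exact hGxy
    · have hcS : cF S = 0 := by
        rw [hcFDef]
        simp only
        rw [if_neg h1, if_neg h2, if_neg h3]
        ring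
      rw [hcS]
      rcases hclassify S hSP with h | h | h | h | h | h | h
      · have hFeq : F r S = F r' S := by
          simp only [hFDef]
          apply Multiset.countP_congr rfl
          intro σ _
          rw [h]
        rw [hGDef]
        simp only
        rw [hFeq]
        simp
      · exact absurd h h3
      · obtain ⟨b, hb, rfl⟩ := h
        exact hGyb b hb
      · obtain ⟨b, hb, rfl⟩ := h
        exact hGybx b hb
      · obtain ⟨d, hd, rfl⟩ := h
        exact hGyxd d hd
      · exact absurd h h1
      · exact absurd h h2
  -- cardinalities
  set Bs : Finset C := Finset.univ.filter (fun z => InB z) with hBsDef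
  set Ds : Finset C := Finset.univ.filter (fun z => InD z) with hDsDef
  have hmemBs : ∀ b, b ∈ Bs ↔ InB b := by
    intro b
    rw [hBsDef, Finset.mem_filter]
    simp
  have hmemDs : ∀ d, d ∈ Ds ↔ InD d := by
    intro d
    rw [hDsDef, Finset.mem_filter]
    simp
  have hcardBD : (P3.filter shBD).card = Bs.card * Ds.card := by
    have himg : P3.filter shBD = (Bs ×ˢ Ds).image (fun bd : C × C => {y, bd.1, bd.2}) := by
      ext S
      rw [Finset.mem_filter, Finset.mem_image]
      constructor
      · rintro ⟨-, b, d, hb, hd, rfl⟩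
        exact ⟨(b, d), Finset.mem_product.2 ⟨(hmemBs b).2 hb, (hmemDs d).2 hd⟩, rfl⟩
      · rintro ⟨⟨b, d⟩, hbd, rfl⟩
        obtain ⟨hb, hd⟩ := Finset.mem_product.1 hbd
        rw [hmemBs] at hb
        rw [hmemDs] at hd
        refine ⟨?_, b, d, hb, hd, rfl⟩
        rw [hP3Def, Finset.mem_filter]
        refine ⟨Finset.mem_powerset.2 (Finset.subset_univ _), ?_⟩
        calc ({y, b, d} : Finset C).card ≤ ({b, d} : Finset C).card + 1 :=
              Finset.card_insert_le _ _
          _ ≤ (({d} : Finset C).card + 1) + 1 := by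
              exact Nat.add_le_add_right (Finset.card_insert_le _ _) 1
          _ = 3 := by simp
    rw [himg, Finset.card_image_of_injOn, Finset.card_product]
    rintro ⟨b, d⟩ hbd ⟨b', d'⟩ hbd' hE
    obtain ⟨hb, hd⟩ := Finset.mem_product.1 hbd
    obtain ⟨hb', hd'⟩ := Finset.mem_product.1 hbd'
    rw [hmemBs] at hb hb'
    rw [hmemDs] at hd hd'
    simp only at hE
    have hbmem : b ∈ ({y, b', d'} : Finset C) := by
      rw [← hE]; simp
    have hdmem : d ∈ ({y, b', d'} : Finset C) := by
      rw [← hE]; simp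
    simp only [Finset.mem_insert, Finset.mem_singleton] at hbmem hdmem
    have hbb' : b = b' := by
      rcases hbmem with h | h | h
      · exact absurd h (hBy b hb)
      · exact h
      · rw [h] at hb
        exact absurd (lt_trans hb.2 hd') (lt_irrefl _)
    have hdd' : d = d' := by
      rcases hdmem with h | h | h
      · exact absurd h (hDy d hd)
      · rw [h] at hd
        exact absurd (lt_trans hb'.2 hd) (lt_irrefl _)
      · exact h
    simp [hbb', hdd']
  have hcardBB : 2 * (P3.filter shBB).card ≤ Bs.card * Bs.card := by
    have h1 : (P3.filter shBB).card ≤ (Bs.powersetCard 2).card := by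
      apply Finset.card_le_card_of_injOn (fun S => S.erase y)
      · intro S hS
        simp only [Finset.mem_coe] at hS ⊢
        rw [Finset.mem_filter] at hS
        obtain ⟨-, b, b', hb, hb', hbb, rfl⟩ := hS
        have hynotmem : y ∉ ({b, b'} : Finset C) := by
          simp only [Finset.mem_insert, Finset.mem_singleton]
          rintro (h | h)
          · exact (hBy b hb) h.symm
          · exact (hBy b' hb') h.symm
        rw [Finset.erase_insert hynotmem, Finset.mem_powersetCard]
        constructor
        · intro z hz
          simp only [Finset.mem_insert, Finset.mem_singleton] at hz
          rcases hz with rfl | rfl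
          · exact (hmemBs z).2 hb
          · exact (hmemBs z).2 hb'
        · rw [Finset.card_insert_of_notMem (by simpa using hbb), Finset.card_singleton]
      · intro S hS S' hS' hE
        rw [Finset.mem_coe, Finset.mem_filter] at hS hS'
        obtain ⟨-, b, b', hb, hb', hbb, rfl⟩ := hS
        obtain ⟨-, c, c', hc, hc', hcc, rfl⟩ := hS'
        dsimp only at hE
        have hy1 : y ∈ ({y, b, b'} : Finset C) := by simp
        have hy2 : y ∈ ({y, c, c'} : Finset C) := by simp
        calc ({y, b, b'} : Finset C) = insert y (({y, b, b'} : Finset C).erase y) :=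
              (Finset.insert_erase hy1).symm
          _ = insert y (({y, c, c'} : Finset C).erase y) := by rw [hE]
          _ = ({y, c, c'} : Finset C) := Finset.insert_erase hy2
    have h2 : (Bs.powersetCard 2).card = Nat.choose Bs.card 2 := Finset.card_powersetCard 2 Bs
    have h3 : Nat.choose Bs.card 2 = Bs.card * (Bs.card - 1) / 2 := Nat.choose_two_right _
    have h4 : Bs.card * (Bs.card - 1) / 2 * 2 ≤ Bs.card * (Bs.card - 1) :=
      Nat.div_mul_le_self _ _
    have h5 : Bs.card * (Bs.card - 1) ≤ Bs.card * Bs.card :=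
      Nat.mul_le_mul_left _ (Nat.sub_le _ _)
    omega
  -- the sum of the lower-bound function
  have hxyP3 : ({y, x} : Finset C) ∈ P3 := by
    rw [hP3Def, Finset.mem_filter]
    refine ⟨Finset.mem_powerset.2 (Finset.subset_univ _), ?_⟩
    calc ({y, x} : Finset C).card ≤ ({x} : Finset C).card + 1 := Finset.card_insert_le _ _
      _ ≤ 3 := by simp
  have hsplit : ∑ S ∈ P3, cF S
      = ((P3.filter shBD).card : ℝ) * ((6 * s - 5) * n)
        + ((P3.filter shBB).card : ℝ) * (-(2 * (1 - s) * n))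
        + (2 * s - 1) * n := by
    rw [hcFDef]
    simp only
    rw [Finset.sum_add_distrib, Finset.sum_add_distrib]
    congr 1
    · congr 1
      · rw [← Finset.sum_filter, Finset.sum_const, nsmul_eq_mul]
      · rw [← Finset.sum_filter, Finset.sum_const, nsmul_eq_mul]
    · rw [Finset.sum_ite_eq' P3 ({y, x} : Finset C) (fun _ => (2 * s - 1) * (n : ℝ)),
        if_pos hxyP3]
  -- relate the cardinalities to the hypothesis hcard
  have hBsA : Bs ⊆ Finset.univ.filter (fun z : C => z ≠ x ∧ AtLeastRatio V s z x) := by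
    intro b hb
    rw [hmemBs] at hb
    rw [Finset.mem_filter]
    exact ⟨Finset.mem_univ _, hBx b hb, hBs b hb⟩
  have hDeq : Finset.univ.filter (fun z : C => Before r x z) = Ds := by
    ext z
    rw [hmemDs, Finset.mem_filter]
    constructor
    · rintro ⟨-, h⟩
      have h' : r x < r z := h
      rw [hqDef] at h'
      exact h'
    · intro h
      refine ⟨Finset.mem_univ _, ?_⟩
      show r x < r z
      rw [hqDef]
      exact h
  have hlamk : lam * (Bs.card : ℝ) ≤ (Ds.card : ℝ) := by
    have h1 : (Bs.card : ℝ) ≤ ((Finset.univ.filter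
        (fun z : C => z ≠ x ∧ AtLeastRatio V s z x)).card : ℝ) := by
      exact_mod_cast Finset.card_le_card hBsA
    rw [hDeq] at hcard
    nlinarith [hcard, hlam]
  -- final estimate
  have hpos : 0 < ∑ S ∈ P3, G S := by
    have h1 : ∑ S ∈ P3, cF S ≤ ∑ S ∈ P3, G S := Finset.sum_le_sum hpoint
    rw [hsplit] at h1
    have hk0 : (0 : ℝ) ≤ (Bs.card : ℝ) := Nat.cast_nonneg _
    have hD0 : (0 : ℝ) ≤ (Ds.card : ℝ) := Nat.cast_nonneg _
    have hNbb : (2 : ℝ) * ((P3.filter shBB).card : ℝ) ≤ (Bs.card : ℝ) * (Bs.card : ℝ) := by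
      exact_mod_cast hcardBB
    have hBDR : ((P3.filter shBD).card : ℝ) = (Bs.card : ℝ) * (Ds.card : ℝ) := by
      exact_mod_cast hcardBD
    rw [hBDR] at h1
    have e1 : 2 * (1 - s) * ((P3.filter shBB).card : ℝ)
        ≤ (1 - s) * ((Bs.card : ℝ) * (Bs.card : ℝ)) := by nlinarith [hNbb, hs1]
    have e2 : (1 - s) * ((Bs.card : ℝ) * (Bs.card : ℝ))
        ≤ lam * (6 * s - 5) * ((Bs.card : ℝ) * (Bs.card : ℝ)) := by
      nlinarith [hls, mul_nonneg hk0 hk0]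
    have e3 : lam * (6 * s - 5) * ((Bs.card : ℝ) * (Bs.card : ℝ))
        ≤ (6 * s - 5) * ((Bs.card : ℝ) * (Ds.card : ℝ)) := by
      have h66 : (0 : ℝ) ≤ (6 * s - 5) * (Bs.card : ℝ) := by nlinarith [hs56, hk0]
      have := mul_le_mul_of_nonneg_right hlamk h66
      nlinarith [this]
    have hcore : 2 * (1 - s) * ((P3.filter shBB).card : ℝ)
        ≤ (6 * s - 5) * ((Bs.card : ℝ) * (Ds.card : ℝ)) := le_trans e1 (le_trans e2 e3)
    nlinarith [h1, hcore, hn1R, hs56, Nat.cast_nonneg (α := ℝ) (P3.filter shBB).card]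
  -- contradiction with the median property
  have hltR : (kDistV 3 r' V : ℝ) < (kDistV 3 r V : ℝ) := by
    have := hbridge
    linarith [hpos, hbridge.symm.le, hbridge.le]
  have hlt : kDistV 3 r' V < kDistV 3 r V := by exact_mod_cast hltR
  exact absurd (hr r') (not_le.2 hlt)
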